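/- Let A be an m×n real matrix of rank at least k, with rank-k column-pivoted QR factorization of Aᵀ given by AᵀZ = QR where Z is an m×m permutation matrix, Q is n×k with orthonormal columns, and R = [R₁ | R₂] with R₁ ∈ ℝ^{k×k} invertible and R₂ ∈ ℝ^{k×(m−k)}. If R₂ = R₁C exactly for some C ∈ ℝ^{k×(m−k)}, then A = P·A(I,:) where A(I,:) consists of k rows of A indexed by the pivoting, and P = Z[I_k | C]ᵀ satisfies P(I,:) = I_k (the k×k identity). -/

import Mathlib

open Matrix
open scoped Matrix.Norms.L2Operator

/-- Exact row interpolative decomposition from a rank-`k` column-pivoted QR of `Aᵀ`: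
with `AᵀZ = Q[R₁ | R₂]`, `Z` the permutation matrix of `e`, `Q` orthonormal columns,
`R₁` invertible, and `R₂ = R₁C`, the matrix `A` (with `m = k + l` rows, rank ≥ k)
satisfies `A = P · A(I,:)` where `I` is the set of pivot rows
(`g t = e⁻¹(embed(inl t))`), `P = Z [I_k | C]ᵀ`, and `P(I,:) = I_k`. -/
theorem stmt11 {k l n : ℕ}
    (A : Matrix (Fin (k + l)) (Fin n) ℝ)
    (hrank : k ≤ A.rank)
    (e : Equiv.Perm (Fin (k + l))) (Z : Matrix (Fin (k + l)) (Fin (k + l)) ℝ)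
    (hZ : Z = e.permMatrix ℝ)
    (Q : Matrix (Fin n) (Fin k) ℝ) (hQ : Qᵀ * Q = 1)
    (R₁ : Matrix (Fin k) (Fin k) ℝ) (hR₁ : IsUnit R₁)
    (R₂ : Matrix (Fin k) (Fin l) ℝ)
    (hQR : Aᵀ * Z = Q * ((Matrix.fromCols R₁ R₂).submatrix id finSumFinEquiv.symm))
    (C : Matrix (Fin k) (Fin l) ℝ) (hC : R₂ = R₁ * C)
    (g : Fin k → Fin (k + l))
    (hg : g = fun t => e.symm (finSumFinEquiv (Sum.inl t)))
    (P : Matrix (Fin (k + l)) (Fin k) ℝ)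
    (hP : P = Z * ((Matrix.fromCols (1 : Matrix (Fin k) (Fin k) ℝ) C).submatrix id
      finSumFinEquiv.symm)ᵀ) :
    A = P * A.submatrix g id ∧ P.submatrix g id = 1 := by
  set f : Fin k → Fin (k + l) := fun t => finSumFinEquiv (Sum.inl t) with hf
  set R : Matrix (Fin k) (Fin (k + l)) ℝ :=
    (Matrix.fromCols R₁ R₂).submatrix id finSumFinEquiv.symm with hR
  set W : Matrix (Fin k) (Fin (k + l)) ℝ :=
    (Matrix.fromCols (1 : Matrix (Fin k) (Fin k) ℝ) C).submatrix id finSumFinEquiv.symm with hW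
  -- Zᵀ * A = A.submatrix e.symm id
  have hZt : Zᵀ = (e.symm).toPEquiv.toMatrix := by
    rw [hZ, Equiv.toPEquiv_symm, PEquiv.toMatrix_symm]
  have h1 : A.submatrix e.symm id = Rᵀ * Qᵀ := by
    have := congrArg Matrix.transpose hQR
    rw [Matrix.transpose_mul, Matrix.transpose_mul, Matrix.transpose_transpose] at this
    rw [← PEquiv.toMatrix_toPEquiv_mul, ← hZt, this]
  -- A.submatrix g id = R₁ᵀ * Qᵀ
  have hRsub : Rᵀ.submatrix f id = R₁ᵀ := by
    ext t c
    simp [hR, hf, Matrix.fromCols]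
  have h2 : A.submatrix g id = R₁ᵀ * Qᵀ := by
    have : A.submatrix g id = (A.submatrix e.symm id).submatrix f id := by
      subst hg; rfl
    rw [this, h1, ← hRsub]
    exact (Matrix.submatrix_mul Rᵀ Qᵀ f id id Function.bijective_id)
  -- R₁ * W = R
  have h3 : Wᵀ * R₁ᵀ = Rᵀ := by
    rw [← Matrix.transpose_mul]
    congr 1
    rw [hW, hR]
    have := (Matrix.submatrix_mul R₁ (Matrix.fromCols (1 : Matrix (Fin k) (Fin k) ℝ) C)
      id id finSumFinEquiv.symm Function.bijective_id).symm
    simp only [Matrix.submatrix_id_id] at this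
    rw [this, Matrix.mul_fromCols, Matrix.mul_one, ← hC]
  constructor
  · rw [h2, hP, Matrix.mul_assoc, ← Matrix.mul_assoc Wᵀ, h3, ← h1, hZ,
      PEquiv.toMatrix_toPEquiv_mul]
    ext i j
    simp
  · rw [hP, hZ, PEquiv.toMatrix_toPEquiv_mul]
    ext t s
    simp [hg, hW, hf, Matrix.fromCols, Matrix.one_apply, eq_comm]
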